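/- Let (aᵢ, bᵢ) and (aᵢ′, bᵢ′), i = 1, …, m, be two families of vectors in ℝⁿ with aᵢ ≤ bᵢ and aᵢ′ ≤ bᵢ′ componentwise, and let F and F′ be the corresponding maxima of upper endpoint functions. Then for every v ∈ ℝⁿ, |F(v) − F′(v)| ≤ (max_{1≤i≤m} (‖aᵢ − aᵢ′‖ + ‖bᵢ − bᵢ′‖)) · ‖v‖. -/

import Mathlib

open RealInnerProductSpace

/-- Componentwise absolute value `|v| = (|v₁|, …, |vₙ|)` of a vector in `ℝⁿ`. -/
noncomputable def vabs {n : ℕ} (v : EuclideanSpace ℝ (Fin n)) : EuclideanSpace ℝ (Fin n) :=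
  WithLp.toLp 2 fun j => |v j|

/-- Maximum of finitely many reals indexed by a nonempty `Fin m`. -/
noncomputable def fsup {m : ℕ} (hm : 0 < m) (f : Fin m → ℝ) : ℝ :=
  Finset.univ.sup' (Finset.univ_nonempty_iff.mpr (Fin.pos_iff_nonempty.mp hm)) f

/-- Upper endpoint function `ḡᵢ(v) = ½⟨aᵢ + bᵢ, v⟩ + ½⟨bᵢ − aᵢ, |v|⟩`. -/
noncomputable def gbar {n m : ℕ} (a b : Fin m → EuclideanSpace ℝ (Fin n)) (i : Fin m)
    (v : EuclideanSpace ℝ (Fin n)) : ℝ :=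
  (1 / 2) * ⟪a i + b i, v⟫ + (1 / 2) * ⟪b i - a i, vabs v⟫

/-- `F(v) = max_{1 ≤ i ≤ m} ḡᵢ(v)`. -/
noncomputable def Fmax {n m : ℕ} (hm : 0 < m) (a b : Fin m → EuclideanSpace ℝ (Fin n))
    (v : EuclideanSpace ℝ (Fin n)) : ℝ :=
  fsup hm fun i => gbar a b i v

lemma norm_vabs {n : ℕ} (v : EuclideanSpace ℝ (Fin n)) : ‖vabs v‖ = ‖v‖ := by
  simp [EuclideanSpace.norm_eq, vabs, sq_abs]

lemma fsup_sub_fsup_le {m : ℕ} (hm : 0 < m) (f g h : Fin m → ℝ)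
    (H : ∀ i, f i - g i ≤ h i) (C : ℝ) (hC : ∀ i, h i ≤ C) :
    fsup hm f - fsup hm g ≤ C := by
  unfold fsup
  rw [sub_le_iff_le_add]
  apply Finset.sup'_le
  intro i _
  have := H i
  have h2 : g i ≤ Finset.univ.sup'
      (Finset.univ_nonempty_iff.mpr (Fin.pos_iff_nonempty.mp hm)) g :=
    Finset.le_sup' _ (Finset.mem_univ i)
  nlinarith [hC i]

lemma abs_gbar_sub {n m : ℕ} (a b a' b' : Fin m → EuclideanSpace ℝ (Fin n)) (i : Fin m)
    (v : EuclideanSpace ℝ (Fin n)) :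
    |gbar a b i v - gbar a' b' i v| ≤ (‖a i - a' i‖ + ‖b i - b' i‖) * ‖v‖ := by
  have key : gbar a b i v - gbar a' b' i v =
      (1 / 2) * ⟪(a i - a' i) + (b i - b' i), v⟫
        + (1 / 2) * ⟪(b i - b' i) - (a i - a' i), vabs v⟫ := by
    unfold gbar
    simp only [inner_sub_left, inner_add_left]
    ring
  rw [key]
  have h1 : |⟪(a i - a' i) + (b i - b' i), v⟫| ≤ (‖a i - a' i‖ + ‖b i - b' i‖) * ‖v‖ := by
    calc |⟪(a i - a' i) + (b i - b' i), v⟫| ≤ ‖(a i - a' i) + (b i - b' i)‖ * ‖v‖ :=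
          abs_real_inner_le_norm _ _
      _ ≤ (‖a i - a' i‖ + ‖b i - b' i‖) * ‖v‖ :=
          mul_le_mul_of_nonneg_right (norm_add_le _ _) (norm_nonneg _)
  have h2 : |⟪(b i - b' i) - (a i - a' i), vabs v⟫| ≤ (‖a i - a' i‖ + ‖b i - b' i‖) * ‖v‖ := by
    calc |⟪(b i - b' i) - (a i - a' i), vabs v⟫| ≤ ‖(b i - b' i) - (a i - a' i)‖ * ‖vabs v‖ :=
          abs_real_inner_le_norm _ _
      _ ≤ (‖a i - a' i‖ + ‖b i - b' i‖) * ‖v‖ := by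
          rw [norm_vabs]
          apply mul_le_mul_of_nonneg_right _ (norm_nonneg _)
          calc ‖(b i - b' i) - (a i - a' i)‖ ≤ ‖b i - b' i‖ + ‖a i - a' i‖ := norm_sub_le _ _
            _ = ‖a i - a' i‖ + ‖b i - b' i‖ := by ring
  calc |(1 / 2) * ⟪(a i - a' i) + (b i - b' i), v⟫
        + (1 / 2) * ⟪(b i - b' i) - (a i - a' i), vabs v⟫|
      ≤ (1 / 2) * |⟪(a i - a' i) + (b i - b' i), v⟫|
        + (1 / 2) * |⟪(b i - b' i) - (a i - a' i), vabs v⟫| := by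
        refine le_trans (abs_add_le _ _) ?_
        rw [abs_mul, abs_mul, abs_of_pos (by norm_num : (0:ℝ) < 1/2)]
    _ ≤ (‖a i - a' i‖ + ‖b i - b' i‖) * ‖v‖ := by nlinarith

/-- Stability estimate for `F` with respect to the endpoint data:
`|F(v) − F′(v)| ≤ (max_i (‖aᵢ − aᵢ′‖ + ‖bᵢ − bᵢ′‖)) ‖v‖`. -/
theorem abs_Fmax_sub_Fmax_le {n m : ℕ} (hm : 0 < m)
    (a b a' b' : Fin m → EuclideanSpace ℝ (Fin n))
    (hab : ∀ i j, a i j ≤ b i j) (hab' : ∀ i j, a' i j ≤ b' i j)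
    (v : EuclideanSpace ℝ (Fin n)) :
    |Fmax hm a b v - Fmax hm a' b' v| ≤
      (fsup hm fun i => ‖a i - a' i‖ + ‖b i - b' i‖) * ‖v‖ := by
  have hC : ∀ i : Fin m, (‖a i - a' i‖ + ‖b i - b' i‖) * ‖v‖ ≤
      (fsup hm fun i => ‖a i - a' i‖ + ‖b i - b' i‖) * ‖v‖ := by
    intro i
    unfold fsup
    exact mul_le_mul_of_nonneg_right (Finset.le_sup' (fun i => ‖a i - a' i‖ + ‖b i - b' i‖) (Finset.mem_univ i)) (norm_nonneg _)
  rw [abs_sub_le_iff]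
  constructor
  · exact fsup_sub_fsup_le hm _ _ (fun i => (‖a i - a' i‖ + ‖b i - b' i‖) * ‖v‖)
      (fun i => le_trans (le_abs_self _) (abs_gbar_sub a b a' b' i v)) _ hC
  · exact fsup_sub_fsup_le hm _ _ (fun i => (‖a i - a' i‖ + ‖b i - b' i‖) * ‖v‖)
      (fun i => le_trans (le_abs_self _) (by
        rw [abs_sub_comm]; exact abs_gbar_sub a b a' b' i v)) _ hC
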